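/- Let Σ be a compact oriented surface of genus ≥ 2 with a finite set P of punctures, let f ∈ M(Σ,P) be a mapping class, and let n be a nonzero integer. Then the set of essential reduction classes satisfies S(f^n) = S(f), and for every g ∈ M(Σ,P), S(g f g^{-1}) = g(S(f)). -/

import Mathlib

/-- Braid relator `x y x (y x y)⁻¹`. -/
def braidRel {α : Type} (x y : FreeGroup α) : FreeGroup α := x * y * x * (y * x * y)⁻¹

/-- Commutation relator `x y (y x)⁻¹`. -/
def commRel {α : Type} (x y : FreeGroup α) : FreeGroup α := x * y * (y * x)⁻¹

/-- Relators for the Artin group of type `A_m` on generators `s_1, …, s_m`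
(0-based indices `0, …, m-1`). -/
def ArelA (m : ℕ) : Set (FreeGroup (Fin m)) :=
  {r | ∃ i j : Fin m,
    (j.val = i.val + 1 ∧ r = braidRel (FreeGroup.of i) (FreeGroup.of j)) ∨
    (i.val + 2 ≤ j.val ∧ r = commRel (FreeGroup.of i) (FreeGroup.of j))}

/-- The Artin group of type `A_m` (braid group on `m+1` strands). -/
abbrev ArtinA (m : ℕ) := PresentedGroup (ArelA m)

/-- The generator `s_{i+1}` of `A[A_m]` (0-based index `i`; junk value `1` if `i ≥ m`). -/
def gA (m : ℕ) (i : ℕ) : ArtinA m :=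
  if h : i < m then PresentedGroup.of ⟨i, h⟩ else 1

/-- 0-based adjacency in the Coxeter graph `D_n` on vertices `0, …, n-1`
(vertex `i` corresponds to `t_{i+1}`): edges `(i, i+1)` for `i+1 ≤ n-2`
and the edge `(n-3, n-1)`. -/
def adjD (n : ℕ) (i j : ℕ) : Prop :=
  (j = i + 1 ∧ j ≤ n - 2) ∨ (i = n - 3 ∧ j = n - 1)

/-- Relators for the Artin group of type `D_n`: braid relation along each edge,
commutation for non-adjacent pairs. -/
def ArelD (n : ℕ) : Set (FreeGroup (Fin n)) :=
  {r | ∃ i j : Fin n, i.val < j.val ∧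
    ((adjD n i.val j.val ∧ r = braidRel (FreeGroup.of i) (FreeGroup.of j)) ∨
     (¬ adjD n i.val j.val ∧ r = commRel (FreeGroup.of i) (FreeGroup.of j)))}

/-- The Artin group of type `D_n`. -/
abbrev ArtinD (n : ℕ) := PresentedGroup (ArelD n)

/-- The generator `t_{i+1}` of `A[D_n]` (0-based index `i`; junk value `1` if `i ≥ n`). -/
def gD (n : ℕ) (i : ℕ) : ArtinD n :=
  if h : i < n then PresentedGroup.of ⟨i, h⟩ else 1

/-- The word `(s_m ⋯ s_1)(s_m ⋯ s_2) ⋯ (s_m s_{m-1}) s_m` (1-based) evaluated on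
a family `s` of group elements (0-based). This is the Garside element of type `A_m`. -/
def deltaAin {G : Type} [Group G] (m : ℕ) (s : ℕ → G) : G :=
  ((List.range m).map (fun k => ((List.range (m - k)).map (fun j => s (m - 1 - j))).prod)).prod

/-- The Garside element `Δ[A_m]`. -/
def deltaA (m : ℕ) : ArtinA m := deltaAin m (gA m)

/-- The factor `t_{k+1} ⋯ t_{n-2} t_{n-1} t_n t_{n-2} ⋯ t_{k+1}` (1-based) of `Δ[D_n]`,
0-based index `k`. -/
def factorD {G : Type} [Group G] (n : ℕ) (t : ℕ → G) (k : ℕ) : G :=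
  ((List.range (n - 2 - k)).map (fun j => t (k + j))).prod * t (n - 2) * t (n - 1) *
    ((List.range (n - 2 - k)).map (fun j => t (n - 3 - j))).prod

/-- The word giving the Garside element of type `D_n`, evaluated on a family `t`. -/
def deltaDin {G : Type} [Group G] (n : ℕ) (t : ℕ → G) : G :=
  ((List.range (n - 1)).map (factorD n t)).prod

/-- The Garside element `Δ[D_n]`. -/
def deltaD (n : ℕ) : ArtinD n := deltaDin n (gD n)

/-- The Garside element `Δ_Y` of the standard parabolic subgroup of `A[D_n]`
generated by `Y = {t_1, …, t_{n-1}}` (a copy of `A[A_{n-1}]`). -/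
def deltaY (n : ℕ) : ArtinD n := deltaAin (n - 1) (gD n)

/-- `κ = 2` if `n` is odd and `κ = 1` if `n` is even. -/
def kap (n : ℕ) : ℤ := if Odd n then 2 else 1

/-- The central quotient `A[D_n]/Z(A[D_n])`. -/
abbrev AZD (n : ℕ) := ArtinD n ⧸ Subgroup.center (ArtinD n)

section BLMAux
variable {G C : Type} [Group G] [MulAction G C]

/-- Essential reduction set, matching the set literal in the theorem. -/
def BLMSet (ι : C → C → ℕ) (h : G) : Set C :=
  {a : C | (∃ A : Finset C, a ∈ A ∧ (∀ b ∈ A, ∀ c ∈ A, b ≠ c → ι b c = 0) ∧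
      ∀ b ∈ A, h • b ∈ A) ∧
    (∀ b : C, ι a b ≠ 0 → ∀ m : ℤ, m ≠ 0 → h ^ m • b ≠ b)}

lemma blm_fix_zpow (h : G) (b : C) (hb : h • b = b) (j : ℤ) : h ^ j • b = b := by
  have hmem : h ∈ MulAction.stabilizer G b := hb
  exact Subgroup.zpow_mem _ hmem j

lemma blm_inv_mem (A : Finset C) (h : G) (hA : ∀ b ∈ A, h • b ∈ A) :
    ∀ b ∈ A, h⁻¹ • b ∈ A := by
  classical
  intro b hb
  have hinj : Function.Injective (fun x : A => (⟨h • x.1, hA _ x.2⟩ : A)) := by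
    intro x y hxy
    have hxy' : h • (x : C) = h • (y : C) := congrArg Subtype.val hxy
    exact Subtype.ext (smul_left_cancel h hxy')
  obtain ⟨⟨c, hc⟩, hce⟩ := (Finite.injective_iff_surjective.mp hinj) ⟨b, hb⟩
  have h1 : h • c = b := congrArg Subtype.val hce
  have h2 : h⁻¹ • b = c := by rw [← h1, inv_smul_smul]
  rw [h2]; exact hc

lemma blm_zpow_mem (A : Finset C) (h : G) (hA : ∀ b ∈ A, h • b ∈ A) :
    ∀ (j : ℤ), ∀ b ∈ A, h ^ j • b ∈ A := by
  intro j
  induction j using Int.induction_on with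
  | zero => intro b hb; simpa using hb
  | succ k ih =>
      intro b hb
      have he : (h : G) ^ ((k : ℤ) + 1) = h ^ (k : ℤ) * h := by
        rw [zpow_add, zpow_one]
      rw [he, mul_smul]
      exact ih _ (hA _ hb)
  | pred k ih =>
      intro b hb
      have he : (h : G) ^ (-(k : ℤ) - 1) = h ^ (-(k : ℤ)) * h⁻¹ := by
        rw [zpow_sub, zpow_one]
      rw [he, mul_smul]
      exact ih _ (blm_inv_mem A h hA _ hb)

lemma blm_exists_period (A : Finset C) (h : G) (hA : ∀ b ∈ A, h • b ∈ A)
    (a : C) (ha : a ∈ A) : ∃ p : ℕ, 0 < p ∧ h ^ p • a = a := by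
  classical
  have hmem : ∀ k : ℕ, h ^ k • a ∈ A := by
    intro k
    have := blm_zpow_mem A h hA (k : ℤ) a ha
    simpa [zpow_natCast] using this
  obtain ⟨i, j, hij, he⟩ :=
    Finite.exists_ne_map_eq_of_infinite (fun k : ℕ => (⟨h ^ k • a, hmem k⟩ : A))
  have he' : h ^ i • a = h ^ j • a := congrArg Subtype.val he
  rcases Nat.lt_or_ge i j with hlt | hge
  · refine ⟨j - i, by omega, ?_⟩
    have hc : h ^ i • (h ^ (j - i) • a) = h ^ i • a := by
      rw [smul_smul, ← pow_add, Nat.add_sub_cancel' (le_of_lt hlt), he']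
    exact smul_left_cancel _ hc
  · have hlt : j < i := by omega
    refine ⟨i - j, by omega, ?_⟩
    have hc : h ^ j • (h ^ (i - j) • a) = h ^ j • a := by
      rw [smul_smul, ← pow_add, Nat.add_sub_cancel' (le_of_lt hlt), ← he']
    exact smul_left_cancel _ hc

lemma blm_pow (ι : C → C → ℕ) (hequiv : ∀ (g : G) (a b : C), ι (g • a) (g • b) = ι a b)
    (f : G) (m : ℤ) (hm : m ≠ 0) : BLMSet ι (f ^ m) = BLMSet ι f := by
  classical
  ext a
  constructor
  · rintro ⟨⟨A, haA, hpair, hinv⟩, hQ⟩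
    -- the essential condition for f
    have Qf : ∀ b : C, ι a b ≠ 0 → ∀ k : ℤ, k ≠ 0 → f ^ k • b ≠ b := by
      intro b hb k hk hfix
      apply hQ b hb k hk
      have h1 : (f ^ m) ^ k = (f ^ k) ^ m := by
        rw [← zpow_mul, ← zpow_mul, mul_comm]
      rw [h1]
      exact blm_fix_zpow (f ^ k) b hfix m
    obtain ⟨p, hp, hper⟩ := blm_exists_period A (f ^ m) hinv a haA
    -- f ^ q fixes a with q = m * p ≠ 0
    have hq0 : m * (p : ℤ) ≠ 0 := mul_ne_zero hm (by exact_mod_cast hp.ne')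
    have hqa : f ^ (m * (p : ℤ)) • a = a := by
      rw [zpow_mul]
      have : (f ^ m) ^ (p : ℤ) • a = ((f ^ m) ^ p : G) • a := by
        norm_cast
      rw [this, hper]
    set N : ℕ := (m * (p : ℤ)).natAbs with hNdef
    have hN : 0 < N := Int.natAbs_pos.mpr hq0
    have hNa : f ^ N • a = a := by
      have key : ∀ j : ℤ, f ^ (m * (p : ℤ) * j) • a = a := by
        intro j
        rw [zpow_mul]
        exact blm_fix_zpow _ _ hqa j
      have h2 : (N : ℤ) = m * (p : ℤ) ∨ (N : ℤ) = -(m * (p : ℤ)) := by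
        rcases Int.natAbs_eq (m * (p : ℤ)) with h1 | h1
        · left; omega
        · right; omega
      have hNz : f ^ (N : ℤ) • a = a := by
        rcases h2 with h2 | h2
        · rw [h2]; exact hqa
        · rw [h2]
          have := key (-1)
          rwa [show m * (p : ℤ) * (-1) = -(m * (p : ℤ)) by ring] at this
      rwa [zpow_natCast] at hNz
    refine ⟨⟨(Finset.range N).image (fun k : ℕ => f ^ k • a), ?_, ?_, ?_⟩, Qf⟩
    · exact Finset.mem_image.mpr ⟨0, Finset.mem_range.mpr hN, by simp⟩
    · intro b hb c hc hbc
      obtain ⟨i, hi, rfl⟩ := Finset.mem_image.mp hb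
      obtain ⟨j, hj, rfl⟩ := Finset.mem_image.mp hc
      rw [Finset.mem_range] at hi hj
      by_contra h0
      set b' : C := f ^ (N - i + j) • a with hb'
      have hib' : f ^ i • b' = f ^ j • a := by
        rw [hb', smul_smul, ← pow_add]
        have h3 : i + (N - i + j) = j + N := by omega
        rw [h3, pow_add, mul_smul, hNa]
      have h1 : ι a b' ≠ 0 := by
        have := hequiv (f ^ i) a b'
        rw [hib'] at this
        rw [this] at h0
        exact h0
      have h2 : f ^ (N : ℤ) • b' = b' := by
        rw [zpow_natCast, hb', smul_smul, ← pow_add]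
        have h3 : N + (N - i + j) = (N - i + j) + N := by omega
        rw [h3, pow_add, mul_smul, hNa]
      exact Qf b' h1 (N : ℤ) (by exact_mod_cast hN.ne') h2
    · intro b hb
      obtain ⟨k, hk, rfl⟩ := Finset.mem_image.mp hb
      rw [Finset.mem_range] at hk
      have h1 : f • f ^ k • a = f ^ (k + 1) • a := by
        rw [smul_smul, ← pow_succ']
      rw [h1]
      rcases Nat.lt_or_ge (k + 1) N with h2 | h2
      · exact Finset.mem_image.mpr ⟨k + 1, Finset.mem_range.mpr h2, rfl⟩
      · have h3 : k + 1 = N := by omega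
        rw [h3, hNa]
        exact Finset.mem_image.mpr ⟨0, Finset.mem_range.mpr hN, by simp⟩
  · rintro ⟨⟨A, haA, hpair, hinv⟩, hQ⟩
    refine ⟨⟨A, haA, hpair, ?_⟩, ?_⟩
    · intro b hb
      exact blm_zpow_mem A f hinv m b hb
    · intro b hb k hk hfix
      apply hQ b hb (m * k) (mul_ne_zero hm hk)
      rw [zpow_mul]
      exact hfix

lemma blm_conj_mem (ι : C → C → ℕ)
    (hequiv : ∀ (g : G) (a b : C), ι (g • a) (g • b) = ι a b)
    (f g : G) (a : C) (ha : a ∈ BLMSet ι f) : g • a ∈ BLMSet ι (g * f * g⁻¹) := by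
  classical
  obtain ⟨⟨A, haA, hpair, hinv⟩, hQ⟩ := ha
  refine ⟨⟨A.image (fun b => g • b), Finset.mem_image_of_mem _ haA, ?_, ?_⟩, ?_⟩
  · intro b hb c hc hbc
    obtain ⟨b0, hb0, rfl⟩ := Finset.mem_image.mp hb
    obtain ⟨c0, hc0, rfl⟩ := Finset.mem_image.mp hc
    rw [hequiv]
    exact hpair _ hb0 _ hc0 (fun h => hbc (by rw [h]))
  · intro b hb
    obtain ⟨b0, hb0, rfl⟩ := Finset.mem_image.mp hb
    have h1 : (g * f * g⁻¹) • g • b0 = g • (f • b0) := by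
      rw [smul_smul, smul_smul]
      congr 1
      group
    rw [h1]
    exact Finset.mem_image_of_mem _ (hinv _ hb0)
  · intro b hb k hk hfix
    have h1 : (g * f * g⁻¹) ^ k = g * f ^ k * g⁻¹ := by
      have := map_zpow (MulAut.conj g) f k
      simpa [MulAut.conj_apply] using this
    rw [h1] at hfix
    have hι : ι a (g⁻¹ • b) ≠ 0 := by
      have := hequiv g a (g⁻¹ • b)
      rw [smul_inv_smul] at this
      rw [this] at hb
      exact hb
    apply hQ (g⁻¹ • b) hι k hk
    conv_rhs => rw [← hfix]
    rw [smul_smul, smul_smul]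
    congr 1
    group

end BLMAux


/-- The set of essential reduction classes of a mapping class `f` of a mapping class group,
acting on the set of isotopy classes of generic circles with geometric intersection number `ι`
(Birman–Lubotzky–McCarthy): `S(fⁿ) = S(f)` for every nonzero integer `n`, and
`S(g f g⁻¹) = g(S(f))` for every mapping class `g`. Here a class `a` is an essential reduction
class for `h` if it belongs to some reduction system for `h` (a simplex of the curve complex,
i.e. a finite set of classes with pairwise intersection number `0`, invariant under `h`) and
for every class `b` with `ι a b ≠ 0` and every `m ∈ ℤ ∖ {0}` one has `hᵐ(b) ≠ b`. -/
theorem essential_reduction_system_power_conj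
    {G C : Type} [Group G] [MulAction G C]
    (ι : C → C → ℕ) (hsymm : ∀ a b : C, ι a b = ι b a)
    (hequiv : ∀ (g : G) (a b : C), ι (g • a) (g • b) = ι a b)
    (S : G → Set C)
    (hS : ∀ (h : G), S h = {a : C |
      (∃ A : Finset C, a ∈ A ∧ (∀ b ∈ A, ∀ c ∈ A, b ≠ c → ι b c = 0) ∧
        ∀ b ∈ A, h • b ∈ A) ∧
      (∀ b : C, ι a b ≠ 0 → ∀ m : ℤ, m ≠ 0 → h ^ m • b ≠ b)})
    (f : G) (m : ℤ) (hm : m ≠ 0) (g : G) :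
    S (f ^ m) = S f ∧ S (g * f * g⁻¹) = (fun b => g • b) '' S f := by
  have hS' : ∀ h : G, S h = BLMSet ι h := hS
  constructor
  · rw [hS', hS']
    exact blm_pow ι hequiv f m hm
  · rw [hS', hS']
    ext a
    constructor
    · intro ha
      refine ⟨g⁻¹ • a, ?_, smul_inv_smul g a⟩
      have h1 := blm_conj_mem ι hequiv (g * f * g⁻¹) g⁻¹ a ha
      have h2 : g⁻¹ * (g * f * g⁻¹) * g⁻¹⁻¹ = f := by group
      rwa [h2] at h1
    · rintro ⟨a0, ha0, rfl⟩
      exact blm_conj_mem ι hequiv f g a0 ha0
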